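/- Let h : (−∞, 0) → ℝ be C¹, with lim_{t → 0⁻} h(t) = 0 and h' integrable on [−1, 0). Let φ : [0, ∞) → ℝ be continuous and bounded on [0,1]. Define Ψ(t) = d/dt (∫₀^t h(s−t) φ(s) ds) for t ∈ (0,1]. Then Ψ is well-defined and |Ψ(t)| ≤ ‖φ‖_{∞,[0,1]} ∫₀^{t} |h'(−u)| du ≤ ‖φ‖_{∞,[0,1]} ∫₀^{1} |h'(−u)| du for all t ∈ (0,1]. -/

import Mathlib

open MeasureTheory Set Filter Metric in
theorem stmt13_aux_deriv (g Q ψ : ℝ → ℝ) (t ε C : ℝ) (hε : 0 < ε)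
    (hg : Integrable g (volume.restrict (Set.Ioo (0:ℝ) 2)))
    (hQc : Continuous Q)
    (hintF : Integrable (fun u => g u * Q (t - u)) (volume.restrict (Set.Ioo (0:ℝ) 2)))
    (hψm : AEStronglyMeasurable (fun u => g u * ψ u) (volume.restrict (Set.Ioo (0:ℝ) 2)))
    (hlip : ∀ᵐ u ∂(volume.restrict (Set.Ioo (0:ℝ) 2)),
      LipschitzOnWith (Real.nnabs (C * |g u|)) (fun τ => g u * Q (τ - u)) (Metric.ball t ε))
    (hbnd : Integrable (fun u => C * |g u|) (volume.restrict (Set.Ioo (0:ℝ) 2)))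
    (hdiff : ∀ᵐ u ∂(volume.restrict (Set.Ioo (0:ℝ) 2)),
      HasDerivAt (fun τ => g u * Q (τ - u)) (g u * ψ u) t) :
    Integrable (fun u => g u * ψ u) (volume.restrict (Set.Ioo (0:ℝ) 2)) ∧
    HasDerivAt (fun τ => ∫ u in Set.Ioo (0:ℝ) 2, g u * Q (τ - u))
      (∫ u in Set.Ioo (0:ℝ) 2, g u * ψ u) t :=
  hasDerivAt_integral_of_dominated_loc_of_lip (bound := fun u => C * |g u|) (Metric.ball_mem_nhds t hε)
    (Filter.Eventually.of_forall fun _ => hg.aestronglyMeasurable.mul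
      ((hQc.comp (continuous_const.sub continuous_id)).aestronglyMeasurable))
    hintF hψm hlip hbnd hdiff

open MeasureTheory Set Filter intervalIntegral Metric
open scoped Topology

set_option maxHeartbeats 1000000 in
theorem stmt13 (h h' φ : ℝ → ℝ)
    (hderiv : ∀ t < (0:ℝ), HasDerivAt h (h' t) t)
    (hcont : ContinuousOn h' (Set.Iio 0))
    (hlim : Filter.Tendsto h (nhdsWithin 0 (Set.Iio 0)) (nhds 0))
    (hint : IntegrableOn h' (Set.Ico (-1:ℝ) 0))
    (hφc : Continuous φ) :
    ∃ Ψ : ℝ → ℝ, ∀ t ∈ Set.Ioc (0:ℝ) 1,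
      HasDerivAt (fun τ => ∫ s in (0:ℝ)..τ, h (s - τ) * φ s) (Ψ t) t ∧
      |Ψ t| ≤ (sSup ((fun s => |φ s|) '' Set.Icc 0 1)) * ∫ u in (0:ℝ)..t, |h' (-u)| ∧
      (sSup ((fun s => |φ s|) '' Set.Icc 0 1)) * (∫ u in (0:ℝ)..t, |h' (-u)|) ≤
        (sSup ((fun s => |φ s|) '' Set.Icc 0 1)) * ∫ u in (0:ℝ)..1, |h' (-u)| := by
  classical
  set M := sSup ((fun s => |φ s|) '' Set.Icc (0:ℝ) 1) with hMdef
  have hφI : ∀ a b : ℝ, IntervalIntegrable φ volume a b := fun a b =>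
    hφc.intervalIntegrable a b
  set Φ : ℝ → ℝ := fun x => ∫ s in (0:ℝ)..x, φ s with hΦdef
  have hΦderiv : ∀ x : ℝ, HasDerivAt Φ (φ x) x := by
    intro x
    exact intervalIntegral.integral_hasDerivAt_right (hφI 0 x)
      hφc.stronglyMeasurable.stronglyMeasurableAtFilter hφc.continuousAt
  have hΦc : Continuous Φ := by
    rw [continuous_iff_continuousAt]; exact fun x => (hΦderiv x).continuousAt
  have hΦ0 : Φ 0 = 0 := intervalIntegral.integral_same
  obtain ⟨C, hC⟩ : ∃ C, ∀ x ∈ Set.Icc (-2:ℝ) 2, ‖φ x‖ ≤ C :=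
    isCompact_Icc.exists_bound_of_continuousOn hφc.continuousOn
  have hC0 : 0 ≤ C := le_trans (norm_nonneg _) (hC 0 (by norm_num))
  obtain ⟨CΦ, hCΦ⟩ : ∃ CΦ, ∀ x ∈ Set.Icc (-2:ℝ) 2, ‖Φ x‖ ≤ CΦ :=
    isCompact_Icc.exists_bound_of_continuousOn hΦc.continuousOn
  -- integrability of u ↦ h' (-u) on (0,2]
  have hg1 : IntegrableOn (fun u => h' (-u)) (Set.Ioc 0 1) := by
    have h2 := ((Measure.measurePreserving_neg (volume : Measure ℝ)).integrableOn_comp_preimage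
      (Homeomorph.neg ℝ).measurableEmbedding).2 hint
    have hset : (Neg.neg ⁻¹' Set.Ico (-1:ℝ) 0) = Set.Ioc (0:ℝ) 1 := by
      ext x; simp only [Set.mem_preimage, Set.mem_Ico, Set.mem_Ioc]
      constructor <;> (rintro ⟨h1, h2⟩; constructor <;> linarith)
    rw [hset] at h2
    exact h2
  have hg12 : IntegrableOn (fun u => h' (-u)) (Set.Ioc 1 2) := by
    apply (ContinuousOn.integrableOn_Icc ?_).mono_set Set.Ioc_subset_Icc_self
    apply hcont.comp continuous_neg.continuousOn
    intro x hx
    simp only [Set.mem_Icc] at hx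
    simp only [Set.mem_Iio]
    linarith [hx.1]
  have hg : IntegrableOn (fun u => h' (-u)) (Set.Ioc 0 2) := by
    rw [show Set.Ioc (0:ℝ) 2 = Set.Ioc 0 1 ∪ Set.Ioc 1 2 from
      (Set.Ioc_union_Ioc_eq_Ioc (by norm_num) (by norm_num)).symm]
    exact hg1.union hg12
  have hgIoo : IntegrableOn (fun u => h' (-u)) (Set.Ioo 0 2) :=
    hg.mono_set Set.Ioo_subset_Ioc_self
  -- integrability of h' on (-2,0)
  have hint2 : IntegrableOn h' (Set.Ioo (-2:ℝ) 0) := by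
    rw [show Set.Ioo (-2:ℝ) 0 = Set.Ioc (-2) (-1) ∪ Set.Ioo (-1) 0 from
      (Set.Ioc_union_Ioo_eq_Ioo (by norm_num) (by norm_num)).symm]
    refine IntegrableOn.union ?_ (hint.mono_set Set.Ioo_subset_Ico_self)
    apply (ContinuousOn.integrableOn_Icc ?_).mono_set Set.Ioc_subset_Icc_self
    exact hcont.mono (fun x hx => by
      simp only [Set.mem_Iio]; exact lt_of_le_of_lt hx.2 (by norm_num))
  -- FTC representation of h
  have hrep : ∀ x ∈ Set.Ico (-2:ℝ) 0, ∫ y in x..0, h' y = -h x := by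
    intro x hx
    have hx2 : -2 ≤ x := hx.1
    have hx0 : x < 0 := hx.2
    have hii : IntervalIntegrable h' volume x 0 := by
      rw [intervalIntegrable_iff_integrableOn_Ioo_of_le hx0.le]
      exact hint2.mono_set (Set.Ioo_subset_Ioo_left hx2)
    have e := intervalIntegral.integral_eq_sub_of_hasDerivAt_of_tendsto (f := h) (f' := h') hx0
      (fun y hy => hderiv y hy.2) hii
      (((hderiv x hx0).continuousAt.tendsto).mono_left nhdsWithin_le_nhds) hlim
    rw [e]; ring
  -- bound on h(-u)
  set D : ℝ := ∫ y in Set.Ioo (-2:ℝ) 0, |h' y| with hDdef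
  have hhb : ∀ u ∈ Set.Ioc (0:ℝ) 2, |h (-u)| ≤ D := by
    intro u hu
    have hmem : (-u) ∈ Set.Ico (-2:ℝ) 0 := by
      simp only [Set.mem_Ico]
      constructor
      · linarith [hu.2]
      · linarith [hu.1]
    have habs : |h (-u)| = |∫ y in (-u)..0, h' y| := by rw [hrep (-u) hmem, abs_neg]
    rw [habs]
    have h1 : |∫ y in (-u)..0, h' y| ≤ ∫ y in Set.Ioo (-u) 0, |h' y| := by
      rw [intervalIntegral.integral_of_le (by linarith [hu.1] : (-u) ≤ 0),
        ← integral_Ioc_eq_integral_Ioo]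
      simpa [Real.norm_eq_abs] using
        MeasureTheory.norm_integral_le_integral_norm (μ := volume.restrict (Set.Ioc (-u) 0)) h'
    refine h1.trans ?_
    apply setIntegral_mono_set hint2.abs
      (Filter.Eventually.of_forall fun y => abs_nonneg _)
    refine (Set.Ioo_subset_Ioo_left (by linarith [hu.2] : (-2:ℝ) ≤ -u)).eventuallyLE
  -- h(-·) continuous on (0,∞)
  have hhmeas : ContinuousOn (fun u => h (-u)) (Set.Ioi (0:ℝ)) := by
    have hhc : ContinuousOn h (Set.Iio 0) := fun x hx =>
      ((hderiv x hx).continuousAt).continuousWithinAt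
    apply hhc.comp continuous_neg.continuousOn
    intro x hx
    simp only [Set.mem_Ioi] at hx
    simp only [Set.mem_Iio]
    linarith
  -- Q = positive-part primitive
  set Q : ℝ → ℝ := fun x => Φ (max x 0) with hQdef
  have hQc : Continuous Q := hΦc.comp (continuous_id.max continuous_const)
  have hQlip : ∀ a ∈ Set.Icc (-2:ℝ) 2, ∀ b ∈ Set.Icc (-2:ℝ) 2, |Q a - Q b| ≤ C * |a - b| := by
    intro a ha b hb
    have h1 : Q a - Q b = ∫ x in (max b 0)..(max a 0), φ x :=
      intervalIntegral.integral_interval_sub_left (hφI 0 (max a 0)) (hφI 0 (max b 0))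
    have h2 : ∀ x ∈ Set.uIoc (max b 0) (max a 0), ‖φ x‖ ≤ C := by
      intro x hx
      rcases hx with ⟨hx1, hx2⟩
      apply hC
      constructor
      · have : (0:ℝ) ≤ min (max b 0) (max a 0) := le_min (le_max_right _ _) (le_max_right _ _)
        linarith
      · have : max (max b 0) (max a 0) ≤ 2 :=
          max_le (max_le hb.2 (by norm_num)) (max_le ha.2 (by norm_num))
        linarith
    calc |Q a - Q b| = ‖∫ x in (max b 0)..(max a 0), φ x‖ := by rw [h1]; rfl
      _ ≤ C * |max a 0 - max b 0| := intervalIntegral.norm_integral_le_of_norm_le_const h2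
      _ ≤ C * |a - b| := mul_le_mul_of_nonneg_left (abs_max_sub_max_le_abs a b 0) hC0
  -- product integrability helper
  have hmul : ∀ (s : Set ℝ), s ⊆ Set.Ioc 0 2 → ∀ (b : ℝ → ℝ) (c : ℝ),
      AEStronglyMeasurable b (volume.restrict s) → (∀ᵐ u ∂(volume.restrict s), ‖b u‖ ≤ c) →
      IntegrableOn (fun u => -h' (-u) * b u) s := by
    intro s hss b c hb hbnd
    have h1 : IntegrableOn (fun u => b u * (-h' (-u))) s :=
      ((hg.mono_set hss).neg).bdd_mul hb hbnd
    exact h1.congr (Filter.Eventually.of_forall fun u => mul_comm (b u) (-h' (-u)))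
  -- key identity
  have key : ∀ τ ∈ Set.Ioo (0:ℝ) 2, (∫ s in (0:ℝ)..τ, h (s - τ) * φ s)
      = ∫ u in Set.Ioo (0:ℝ) 2, -h' (-u) * Q (τ - u) := by
    intro τ hτ
    obtain ⟨hτ0, hτ2⟩ := hτ
    have hsub : Set.Ioc (0:ℝ) τ ⊆ Set.Ioc (0:ℝ) 2 := Set.Ioc_subset_Ioc_right hτ2.le
    have step1 : (∫ s in (0:ℝ)..τ, h (s - τ) * φ s) = ∫ u in (0:ℝ)..τ, h (-u) * φ (τ - u) := by
      have e := intervalIntegral.integral_comp_sub_left (a := (0:ℝ)) (b := τ)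
        (fun s => h (s - τ) * φ s) τ
      rw [sub_self, sub_zero] at e
      rw [← e]
      apply intervalIntegral.integral_congr
      intro x _
      have hx : τ - x - τ = -x := by ring
      show h (τ - x - τ) * φ (τ - x) = h (-x) * φ (τ - x)
      rw [hx]
    have i1 : IntervalIntegrable (fun u => -h' (-u) * Φ (τ - u)) volume 0 τ := by
      rw [intervalIntegrable_iff_integrableOn_Ioc_of_le hτ0.le]
      refine hmul _ hsub (fun u => Φ (τ - u)) CΦ
        (Continuous.aestronglyMeasurable (by fun_prop)) ?_
      rw [ae_restrict_iff' measurableSet_Ioc]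
      refine Filter.Eventually.of_forall fun u hu => hCΦ (τ - u) ?_
      constructor
      · simp only [Set.mem_Ioc] at hu; linarith [hu.2]
      · simp only [Set.mem_Ioc] at hu; linarith [hu.1]
    have i2 : IntervalIntegrable (fun u => h (-u) * -φ (τ - u)) volume 0 τ := by
      rw [intervalIntegrable_iff_integrableOn_Ioc_of_le hτ0.le]
      refine Integrable.bdd_mul (c := D)
        (((hφc.comp (continuous_const.sub continuous_id)).neg).integrableOn_Ioc)
        ((hhmeas.mono (fun x hx => hx.1)).aestronglyMeasurable measurableSet_Ioc) ?_
      rw [ae_restrict_iff' measurableSet_Ioc]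
      exact Filter.Eventually.of_forall fun u hu => hhb u (hsub hu)
    have parts : ∫ u in (0:ℝ)..τ, h (-u) * φ (τ - u)
        = ∫ u in (0:ℝ)..τ, -h' (-u) * Φ (τ - u) := by
      have hP : ∀ u ∈ Set.Ioo 0 τ, HasDerivAt (fun u => h (-u) * Φ (τ - u))
          (-h' (-u) * Φ (τ - u) + h (-u) * -φ (τ - u)) u := by
        intro u hu
        have h1 : HasDerivAt (fun u : ℝ => h (-u)) (-h' (-u)) u := by
          have := (hderiv (-u) (by simp only [neg_neg, Left.neg_neg_iff]; exact hu.1)).comp u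
            (hasDerivAt_neg u)
          simpa [Function.comp_def, mul_comm] using this
        have h2 : HasDerivAt (fun u : ℝ => Φ (τ - u)) (-φ (τ - u)) u := by
          have := (hΦderiv (τ - u)).comp u ((hasDerivAt_id u).const_sub τ)
          simpa [Function.comp_def] using this
        exact h1.mul h2
      have hPint : IntervalIntegrable
          (fun u => -h' (-u) * Φ (τ - u) + h (-u) * -φ (τ - u)) volume 0 τ := i1.add i2
      have tend0 : Tendsto (fun u => h (-u) * Φ (τ - u)) (𝓝[>] (0:ℝ)) (𝓝 0) := by
        have tneg : Tendsto (fun u : ℝ => -u) (𝓝[>] (0:ℝ)) (𝓝[<] (0:ℝ)) := by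
          apply tendsto_nhdsWithin_of_tendsto_nhds_of_eventually_within
          · simpa using (continuous_neg.tendsto (0:ℝ)).mono_left nhdsWithin_le_nhds
          · filter_upwards [self_mem_nhdsWithin] with x hx
            simp only [Set.mem_Ioi] at hx
            simp only [Set.mem_Iio]
            linarith
        have t1 : Tendsto (fun u => h (-u)) (𝓝[>] (0:ℝ)) (𝓝 0) := hlim.comp tneg
        have t2 : Tendsto (fun u => Φ (τ - u)) (𝓝[>] (0:ℝ)) (𝓝 (Φ τ)) := by
          have : ContinuousAt (fun u : ℝ => Φ (τ - u)) 0 :=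
            (hΦc.comp (continuous_const.sub continuous_id)).continuousAt
          simpa using this.tendsto.mono_left nhdsWithin_le_nhds
        simpa using t1.mul t2
      have tendτ : Tendsto (fun u => h (-u) * Φ (τ - u)) (𝓝[<] τ) (𝓝 0) := by
        have t1 : Tendsto (fun u => h (-u)) (𝓝[<] τ) (𝓝 (h (-τ))) := by
          have : ContinuousAt (fun u : ℝ => h (-u)) τ :=
            (hderiv (-τ) (by linarith)).continuousAt.comp (continuous_neg.continuousAt)
          exact this.tendsto.mono_left nhdsWithin_le_nhds
        have t2 : Tendsto (fun u => Φ (τ - u)) (𝓝[<] τ) (𝓝 0) := by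
          have : ContinuousAt (fun u : ℝ => Φ (τ - u)) τ :=
            (hΦc.comp (continuous_const.sub continuous_id)).continuousAt
          have e := this.tendsto.mono_left (nhdsWithin_le_nhds (s := Set.Iio τ))
          simpa [hΦ0] using e
        simpa using t1.mul t2
      have e := intervalIntegral.integral_eq_sub_of_hasDerivAt_of_tendsto hτ0 hP hPint tend0 tendτ
      rw [intervalIntegral.integral_add i1 i2] at e
      have h3 : ∫ u in (0:ℝ)..τ, h (-u) * -φ (τ - u)
          = -∫ u in (0:ℝ)..τ, h (-u) * φ (τ - u) := by
        rw [← intervalIntegral.integral_neg]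
        apply intervalIntegral.integral_congr
        intro x _
        ring
      rw [h3] at e
      linarith
    have step3 : ∫ u in (0:ℝ)..τ, -h' (-u) * Φ (τ - u)
        = ∫ u in Set.Ioo (0:ℝ) 2, -h' (-u) * Q (τ - u) := by
      rw [intervalIntegral.integral_of_le hτ0.le]
      have e1 : ∫ u in Set.Ioc 0 τ, -h' (-u) * Φ (τ - u)
          = ∫ u in Set.Ioc 0 τ, -h' (-u) * Q (τ - u) := by
        apply setIntegral_congr_fun measurableSet_Ioc
        intro u hu
        have : max (τ - u) 0 = τ - u := max_eq_left (by linarith [hu.2])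
        simp only [hQdef, this]
      rw [e1]
      have hQint2 : IntegrableOn (fun u => -h' (-u) * Q (τ - u)) (Set.Ioo 0 2) := by
        refine hmul _ Set.Ioo_subset_Ioc_self (fun u => Q (τ - u)) CΦ
          ((hQc.comp (continuous_const.sub continuous_id)).aestronglyMeasurable) ?_
        rw [ae_restrict_iff' measurableSet_Ioo]
        refine Filter.Eventually.of_forall fun u hu => hCΦ (max (τ - u) 0) ?_
        simp only [Set.mem_Ioo] at hu
        constructor
        · linarith [le_max_right (τ - u) 0]
        · apply max_le (by linarith [hu.1]) (by norm_num)
      rw [show Set.Ioo (0:ℝ) 2 = Set.Ioc 0 τ ∪ Set.Ioo τ 2 from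
        (Set.Ioc_union_Ioo_eq_Ioo hτ0.le hτ2).symm]
      rw [setIntegral_union ?_ measurableSet_Ioo
        (hQint2.mono_set (by rw [show Set.Ioo (0:ℝ) 2 = Set.Ioc 0 τ ∪ Set.Ioo τ 2 from
          (Set.Ioc_union_Ioo_eq_Ioo hτ0.le hτ2).symm]; exact Set.subset_union_left))
        (hQint2.mono_set (by rw [show Set.Ioo (0:ℝ) 2 = Set.Ioc 0 τ ∪ Set.Ioo τ 2 from
          (Set.Ioc_union_Ioo_eq_Ioo hτ0.le hτ2).symm]; exact Set.subset_union_right))]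
      · have hzero : ∫ u in Set.Ioo τ 2, -h' (-u) * Q (τ - u) = 0 := by
          rw [setIntegral_congr_fun measurableSet_Ioo (g := fun _ => (0:ℝ))]
          · simp
          · intro u hu
            have : max (τ - u) 0 = 0 := max_eq_right (by linarith [hu.1])
            simp [hQdef, this, hΦ0]
        rw [hzero, add_zero]
      · rw [Set.disjoint_left]
        rintro x ⟨_, hx2⟩ ⟨hx3, _⟩
        linarith
    exact step1.trans (parts.trans step3)
  -- the candidate derivative function
  refine ⟨fun r => ∫ u in Set.Ioo (0:ℝ) 2, -h' (-u) * (if u < r then φ (r - u) else 0),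
    fun t ht => ?_⟩
  obtain ⟨ht0, ht1⟩ := ht
  have ht2 : t < 2 := lt_of_le_of_lt ht1 one_lt_two
  -- dominated differentiation
  have hne : ∀ᵐ u : ℝ ∂(volume : Measure ℝ), u ≠ t := by
    rw [ae_iff]
    simp only [ne_eq, not_not, Set.setOf_eq_eq_singleton]
    exact Real.volume_singleton
  have gmeas : AEStronglyMeasurable (fun u => -h' (-u)) (volume.restrict (Set.Ioo (0:ℝ) 2)) :=
    hgIoo.neg.aestronglyMeasurable
  have int1 : Integrable (fun u => -h' (-u) * Q (t - u))
      (volume.restrict (Set.Ioo (0:ℝ) 2)) := by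
    refine hmul _ Set.Ioo_subset_Ioc_self (fun u => Q (t - u)) CΦ
      ((hQc.comp (continuous_const.sub continuous_id)).aestronglyMeasurable) ?_
    rw [ae_restrict_iff' measurableSet_Ioo]
    refine Filter.Eventually.of_forall fun u hu => hCΦ (max (t - u) 0) ?_
    simp only [Set.mem_Ioo] at hu
    constructor
    · linarith [le_max_right (t - u) 0]
    · apply max_le (by linarith [hu.1]) (by norm_num)
  have meas2 : AEStronglyMeasurable (fun u => -h' (-u) * (if u < t then φ (t - u) else 0))
      (volume.restrict (Set.Ioo (0:ℝ) 2)) := by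
    have base : AEStronglyMeasurable
        (fun u => -h' (-u) * Set.indicator (Set.Iio t) (fun u => φ (t - u)) u)
        (volume.restrict (Set.Ioo (0:ℝ) 2)) :=
      gmeas.mul (((hφc.comp
        (continuous_const.sub continuous_id)).stronglyMeasurable.indicator
        measurableSet_Iio).aestronglyMeasurable)
    apply base.congr
    refine Filter.Eventually.of_forall fun u => ?_
    by_cases hc : u < t
    · simp [Set.indicator_of_mem, Set.mem_Iio, hc]
    · simp [Set.indicator_apply, Set.mem_Iio, hc]
  have lip : ∀ᵐ u ∂(volume.restrict (Set.Ioo (0:ℝ) 2)),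
      LipschitzOnWith (Real.nnabs (C * |(-h' (-u))|)) (fun τ => -h' (-u) * Q (τ - u))
        (Metric.ball t (t/2)) := by
    filter_upwards [ae_restrict_mem measurableSet_Ioo] with u hu
    simp only [abs_neg]
    simp only [Set.mem_Ioo] at hu
    rw [lipschitzOnWith_iff_dist_le_mul]
    intro x hx y hy
    rw [Metric.mem_ball, Real.dist_eq] at hx hy
    have hxb := abs_lt.1 hx
    have hyb := abs_lt.1 hy
    have hxm : x - u ∈ Set.Icc (-2:ℝ) 2 := by
      constructor
      · nlinarith [hu.2, hxb.1, ht0, ht1]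
      · nlinarith [hu.1, hxb.2, ht0, ht1]
    have hym : y - u ∈ Set.Icc (-2:ℝ) 2 := by
      constructor
      · nlinarith [hu.2, hyb.1, ht0, ht1]
      · nlinarith [hu.1, hyb.2, ht0, ht1]
    have hcoe : ((Real.nnabs (C * |h' (-u)|)) : ℝ) = C * |h' (-u)| := by
      rw [Real.coe_nnabs, abs_of_nonneg (mul_nonneg hC0 (abs_nonneg _))]
    rw [hcoe, Real.dist_eq, Real.dist_eq]
    have e1 : -h' (-u) * Q (x - u) - -h' (-u) * Q (y - u)
        = (-h' (-u)) * (Q (x - u) - Q (y - u)) := by ring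
    rw [e1, abs_mul, abs_neg]
    calc |h' (-u)| * |Q (x - u) - Q (y - u)|
        ≤ |h' (-u)| * (C * |(x - u) - (y - u)|) :=
          mul_le_mul_of_nonneg_left (hQlip _ hxm _ hym) (abs_nonneg _)
      _ = C * |h' (-u)| * |x - y| := by rw [show (x - u) - (y - u) = x - y by ring]; ring
  have bint : Integrable (fun u => C * |(-h' (-u))|) (volume.restrict (Set.Ioo (0:ℝ) 2)) := by
    simpa only [abs_neg] using hgIoo.abs.const_mul C
  have diff : ∀ᵐ u ∂(volume.restrict (Set.Ioo (0:ℝ) 2)),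
      HasDerivAt (fun τ => -h' (-u) * Q (τ - u))
        (-h' (-u) * (if u < t then φ (t - u) else 0)) t := by
    filter_upwards [ae_restrict_mem measurableSet_Ioo, ae_restrict_of_ae hne] with u hu hut
    rcases lt_or_gt_of_ne hut with hlt | hgt
    · rw [if_pos hlt]
      have hd : HasDerivAt (fun τ : ℝ => Φ (τ - u)) (φ (t - u)) t := by
        have := (hΦderiv (t - u)).comp t ((hasDerivAt_id t).sub_const u)
        simpa [Function.comp_def] using this
      have hd2 : HasDerivAt (fun τ : ℝ => -h' (-u) * Φ (τ - u))
          (-h' (-u) * φ (t - u)) t := hd.const_mul (-h' (-u))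
      apply hd2.congr_of_eventuallyEq
      filter_upwards [Ioi_mem_nhds hlt] with τ hτ
      have hm : max (τ - u) 0 = τ - u := max_eq_left (by simp only [Set.mem_Ioi] at hτ; linarith)
      simp only [hQdef, hm]
    · rw [if_neg (by linarith : ¬ u < t), mul_zero]
      apply (hasDerivAt_const t (0:ℝ)).congr_of_eventuallyEq
      filter_upwards [Iio_mem_nhds hgt] with τ hτ
      have hm : max (τ - u) 0 = 0 := max_eq_right (by simp only [Set.mem_Iio] at hτ; linarith)
      simp [hQdef, hm, hΦ0]
  have main := stmt13_aux_deriv (fun u => -h' (-u)) Q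
    (fun u => if u < t then φ (t - u) else 0) t (t/2) C
    (by linarith : (0:ℝ) < t/2) hgIoo.neg hQc int1 meas2 lip bint diff
  have hF'int : IntegrableOn (fun u => -h' (-u) * (if u < t then φ (t - u) else 0))
      (Set.Ioo (0:ℝ) 2) := main.1
  have hGderiv := main.2
  -- transfer the derivative to F
  have hFG : (fun τ => ∫ s in (0:ℝ)..τ, h (s - τ) * φ s)
      =ᶠ[𝓝 t] (fun τ => ∫ u in Set.Ioo (0:ℝ) 2, -h' (-u) * Q (τ - u)) := by
    filter_upwards [Ioo_mem_nhds ht0 ht2] with τ hτ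
    exact key τ hτ
  have hFderiv : HasDerivAt (fun τ => ∫ s in (0:ℝ)..τ, h (s - τ) * φ s)
      (∫ u in Set.Ioo (0:ℝ) 2, -h' (-u) * (if u < t then φ (t - u) else 0)) t :=
    hGderiv.congr_of_eventuallyEq hFG
  refine ⟨hFderiv, ?_, ?_⟩
  · -- the first bound
    have hMle : ∀ x ∈ Set.Icc (0:ℝ) 1, |φ x| ≤ M := fun x hx =>
      le_csSup (isCompact_Icc.bddAbove_image (continuous_abs.comp hφc).continuousOn)
        (Set.mem_image_of_mem _ hx)
    have hM0 : (0:ℝ) ≤ M := (abs_nonneg (φ 0)).trans (hMle 0 (by norm_num))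
    have hsplitset : Set.Ioo (0:ℝ) 2 = Set.Ioo 0 t ∪ Set.Ico t 2 :=
      (Set.Ioo_union_Ico_eq_Ioo ht0 ht2.le).symm
    have hi1 : IntegrableOn (fun u => -h' (-u) * (if u < t then φ (t - u) else 0))
        (Set.Ioo 0 t) := hF'int.mono_set (by rw [hsplitset]; exact Set.subset_union_left)
    have hi2 : IntegrableOn (fun u => -h' (-u) * (if u < t then φ (t - u) else 0))
        (Set.Ico t 2) := hF'int.mono_set (by rw [hsplitset]; exact Set.subset_union_right)
    have hsplit : (∫ u in Set.Ioo (0:ℝ) 2, -h' (-u) * (if u < t then φ (t - u) else 0))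
        = ∫ u in Set.Ioo (0:ℝ) t, -h' (-u) * φ (t - u) := by
      rw [hsplitset, setIntegral_union ?_ measurableSet_Ico hi1 hi2]
      · have e2 : ∫ u in Set.Ico t 2, -h' (-u) * (if u < t then φ (t - u) else 0) = 0 := by
          rw [setIntegral_congr_fun measurableSet_Ico (g := fun _ => (0:ℝ))]
          · simp
          · intro u hu
            have hnot : ¬ u < t := not_lt.2 hu.1
            simp only [hnot, if_false, mul_zero]
        have e1 : ∫ u in Set.Ioo (0:ℝ) t, -h' (-u) * (if u < t then φ (t - u) else 0)
            = ∫ u in Set.Ioo (0:ℝ) t, -h' (-u) * φ (t - u) := by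
          apply setIntegral_congr_fun measurableSet_Ioo
          intro u hu
          simp only [hu.2, if_true]
        rw [e2, add_zero, e1]
      · rw [Set.disjoint_left]
        rintro x ⟨_, hx2⟩ ⟨hx3, _⟩
        linarith
    show |∫ u in Set.Ioo (0:ℝ) 2, -h' (-u) * (if u < t then φ (t - u) else 0)|
        ≤ M * ∫ u in (0:ℝ)..t, |h' (-u)|
    rw [hsplit]
    have hintf : IntegrableOn (fun u => -h' (-u) * φ (t - u)) (Set.Ioo 0 t) := by
      refine hmul _ (fun x hx => ⟨hx.1, by linarith [hx.2, ht2]⟩) (fun u => φ (t - u)) C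
        (Continuous.aestronglyMeasurable (by fun_prop)) ?_
      rw [ae_restrict_iff' measurableSet_Ioo]
      refine Filter.Eventually.of_forall fun u hu => hC (t - u) ?_
      simp only [Set.mem_Ioo] at hu
      constructor
      · linarith [hu.2]
      · linarith [hu.1]
    have hintM : IntegrableOn (fun u => M * |h' (-u)|) (Set.Ioo 0 t) :=
      (hg.mono_set (fun x hx => ⟨hx.1, by linarith [hx.2]⟩)).abs.const_mul M
    calc |∫ u in Set.Ioo (0:ℝ) t, -h' (-u) * φ (t - u)|
        ≤ ∫ u in Set.Ioo (0:ℝ) t, |(-h' (-u)) * φ (t - u)| := by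
          simpa only [Real.norm_eq_abs] using MeasureTheory.norm_integral_le_integral_norm
            (μ := volume.restrict (Set.Ioo (0:ℝ) t)) (fun u => -h' (-u) * φ (t - u))
      _ ≤ ∫ u in Set.Ioo (0:ℝ) t, M * |h' (-u)| := by
          apply setIntegral_mono_on hintf.abs hintM measurableSet_Ioo
          intro u hu
          rw [abs_mul, abs_neg]
          have hφle : |φ (t - u)| ≤ M := hMle _ ⟨by linarith [hu.2], by linarith [hu.1]⟩
          calc |h' (-u)| * |φ (t - u)| ≤ |h' (-u)| * M :=
                mul_le_mul_of_nonneg_left hφle (abs_nonneg _)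
            _ = M * |h' (-u)| := mul_comm _ _
      _ = M * ∫ u in Set.Ioo (0:ℝ) t, |h' (-u)| := MeasureTheory.integral_const_mul M _
      _ = M * ∫ u in (0:ℝ)..t, |h' (-u)| := by
          rw [intervalIntegral.integral_of_le ht0.le, integral_Ioc_eq_integral_Ioo]
  · -- second bound
    have hMle : ∀ x ∈ Set.Icc (0:ℝ) 1, |φ x| ≤ M := fun x hx =>
      le_csSup (isCompact_Icc.bddAbove_image (continuous_abs.comp hφc).continuousOn)
        (Set.mem_image_of_mem _ hx)
    have hM0 : (0:ℝ) ≤ M := (abs_nonneg (φ 0)).trans (hMle 0 (by norm_num))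
    apply mul_le_mul_of_nonneg_left ?_ hM0
    have iab : ∀ a b : ℝ, 0 ≤ a → b ≤ 2 → a ≤ b →
        IntervalIntegrable (fun u => |h' (-u)|) volume a b := by
      intro a b ha hb hab
      rw [intervalIntegrable_iff_integrableOn_Ioc_of_le hab]
      exact (hg.mono_set (Set.Ioc_subset_Ioc ha hb)).abs
    have hadd : (∫ u in (0:ℝ)..t, |h' (-u)|) + ∫ u in t..1, |h' (-u)|
        = ∫ u in (0:ℝ)..1, |h' (-u)| :=
      intervalIntegral.integral_add_adjacent_intervals
        (iab 0 t le_rfl (by linarith) ht0.le) (iab t 1 ht0.le (by norm_num) ht1)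
    have hpos : 0 ≤ ∫ u in t..1, |h' (-u)| :=
      intervalIntegral.integral_nonneg ht1 (fun u _ => abs_nonneg _)
    linarith
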